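/- Let G be a topological group, H a closed normal subgroup, and suppose (G,H) is a good pair. Let P, Q, R be directed posets with an order-preserving map φ : R → P × Q whose image is cofinal. If H has a neighborhood P-base at the identity (in the subspace topology) and the quotient group G/H has a neighborhood Q-base at its identity, then G has a neighborhood R-base at the identity. -/

import Mathlib

open Pointwise

/-- A neighborhood `P`-base at a point: a neighborhood base indexed by `P`,
decreasing with respect to the order of `P`. -/
def HasNbhdPBase (P : Type*) [Preorder P] {X : Type*} [TopologicalSpace X] (x : X) : Prop :=
  ∃ U : P → Set X, (∀ p, U p ∈ nhds x) ∧ Antitone U ∧ ∀ V ∈ nhds x, ∃ p, U p ⊆ V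

theorem stmt9 {G : Type*} [Group G] [TopologicalSpace G] [IsTopologicalGroup G]
    (H : Subgroup G) [H.Normal] (hclosed : IsClosed (H : Set G))
    -- the good pair data: `𝓑` is a neighborhood base at the identity of `H`
    (𝓑 : Set (Set H)) (h𝓑nhds : ∀ B ∈ 𝓑, B ∈ nhds (1 : H))
    (h𝓑base : ∀ V ∈ nhds (1 : H), ∃ B ∈ 𝓑, B ⊆ V)
    (p : Set H → Set G)
    (hopen : ∀ B ∈ 𝓑, IsOpen (p B))
    (hcap : ∀ B ∈ 𝓑, p B ∩ (H : Set G) = Subtype.val '' B)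
    (hsq : ∀ B ∈ 𝓑, ∀ B' ∈ 𝓑, B * B ⊆ B' → p B * p B ⊆ p B')
    (hinv : ∀ B ∈ 𝓑, ∀ B' ∈ 𝓑, B⁻¹ ⊆ B' → (p B)⁻¹ ⊆ p B')
    {P Q R : Type*} [Preorder P] [Preorder Q] [Preorder R]
    (hPdir : IsDirected P (· ≤ ·)) (hQdir : IsDirected Q (· ≤ ·))
    (hRdir : IsDirected R (· ≤ ·))
    (φ : R → P × Q) (hφ : Monotone φ) (hφcof : ∀ q : P × Q, ∃ r : R, q ≤ φ r)
    (hHbase : HasNbhdPBase P (1 : H))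
    (hQbase : HasNbhdPBase Q (1 : G ⧸ H)) :
    HasNbhdPBase R (1 : G) := by
  classical
  obtain ⟨U, hU1, hU2, hU3⟩ := hHbase
  obtain ⟨W, hW1, hW2, hW3⟩ := hQbase
  -- the "tube" construction
  set T : Set H → Set G := fun A => ⋃ B ∈ {B | B ∈ 𝓑 ∧ B ⊆ A}, p B with hTdef
  have hTmono : ∀ {A A' : Set H}, A ⊆ A' → T A ⊆ T A' := by
    intro A A' hAA'
    apply Set.iUnion₂_subset
    intro B hB
    exact Set.subset_biUnion_of_mem (u := p) ⟨hB.1, hB.2.trans hAA'⟩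
  have hone : ∀ B ∈ 𝓑, (1 : G) ∈ p B := by
    intro B hB
    have h1 : (1 : H) ∈ B := mem_of_mem_nhds (h𝓑nhds B hB)
    have : ((1 : H) : G) ∈ p B ∩ (H : Set G) := by
      rw [hcap B hB]; exact ⟨1, h1, rfl⟩
    simpa using this.1
  have hTnhds : ∀ A ∈ nhds (1 : H), T A ∈ nhds (1 : G) := by
    intro A hA
    obtain ⟨B, hB, hBA⟩ := h𝓑base A hA
    have hsub : p B ⊆ T A := Set.subset_biUnion_of_mem (u := p) ⟨hB, hBA⟩
    exact Filter.mem_of_superset ((hopen B hB).mem_nhds (hone B hB)) hsub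
  -- key lemma
  have key : ∀ V ∈ nhds (1 : G), ∃ A ∈ nhds (1 : H), ∃ V₂ : Set G, IsOpen V₂ ∧ (1 : G) ∈ V₂ ∧
      ∀ x ∈ T A, ∀ v ∈ V₂, v⁻¹ * x ∈ (H : Set G) → x ∈ V := by
    intro V hV
    obtain ⟨V₀, hV₀open, hV₀1, hV₀V⟩ := exists_open_nhds_one_mul_subset hV
    set V₁ : Set G := V₀ ∩ V₀⁻¹ with hV₁def
    have hV₁open : IsOpen V₁ := hV₀open.inter hV₀open.inv
    have hV₁1 : (1 : G) ∈ V₁ := ⟨hV₀1, by simpa using hV₀1⟩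
    have hV₁mul : V₁ * V₁ ⊆ V := fun x hx => hV₀V (Set.mul_subset_mul
      Set.inter_subset_left Set.inter_subset_left hx)
    -- B₁ ∈ 𝓑 with coe '' B₁ ⊆ V₁
    have hpre : (Subtype.val ⁻¹' V₁ : Set H) ∈ nhds (1 : H) :=
      continuous_subtype_val.continuousAt.preimage_mem_nhds (by simpa using hV₁open.mem_nhds hV₁1)
    obtain ⟨B₁, hB₁, hB₁V₁⟩ := h𝓑base _ hpre
    -- D ∈ 𝓑 with D * D ⊆ B₁
    obtain ⟨N, hN, hNmul⟩ := exists_nhds_one_split (h𝓑nhds B₁ hB₁)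
    obtain ⟨D, hD, hDN⟩ := h𝓑base N hN
    have hDD : D * D ⊆ B₁ := by
      rintro _ ⟨a, ha, b, hb, rfl⟩
      exact hNmul a (hDN ha) b (hDN hb)
    -- E ∈ 𝓑 with E ⊆ D⁻¹
    obtain ⟨E, hE, hED⟩ := h𝓑base D⁻¹ (inv_mem_nhds_one _ (h𝓑nhds D hD))
    have hED' : E⁻¹ ⊆ D := by intro b hb; simpa using hED (Set.mem_inv.mp hb)
    refine ⟨D⁻¹ ∩ E⁻¹, Filter.inter_mem (inv_mem_nhds_one _ (h𝓑nhds D hD))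
      (inv_mem_nhds_one _ (h𝓑nhds E hE)), V₁ ∩ (p D)⁻¹, hV₁open.inter (hopen D hD).inv,
      ⟨hV₁1, by simpa using hone D hD⟩, ?_⟩
    intro x hx v hv hvx
    obtain ⟨B', hB'U, hxB'⟩ := Set.mem_iUnion₂.mp hx
    obtain ⟨hB', hB'A⟩ := hB'U
    have hB'E : B'⁻¹ ⊆ E := by
      intro b hb
      have : b⁻¹ ∈ B' := Set.mem_inv.mp hb
      simpa using (hB'A this).2
    -- x ∈ p D
    have hxD : x ∈ p D := by
      have h1 : (p B')⁻¹ ⊆ p E := hinv B' hB' E hE hB'E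
      have h2 : (p E)⁻¹ ⊆ p D := hinv E hE D hD hED'
      have : x⁻¹ ∈ p E := h1 (by simpa using hxB')
      have : x = (x⁻¹)⁻¹ := by group
      rw [this]
      exact h2 (by simpa using ‹x⁻¹ ∈ p E›)
    have hvD : v⁻¹ ∈ p D := Set.mem_inv.mp hv.2
    have hprod : v⁻¹ * x ∈ p B₁ := hsq D hD B₁ hB₁ hDD (Set.mul_mem_mul hvD hxD)
    have hmem : v⁻¹ * x ∈ p B₁ ∩ (H : Set G) := ⟨hprod, hvx⟩
    rw [hcap B₁ hB₁] at hmem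
    obtain ⟨b, hbB₁, hbeq⟩ := hmem
    have hbV₁ : v⁻¹ * x ∈ V₁ := by rw [← hbeq]; exact hB₁V₁ hbB₁
    have : x = v * (v⁻¹ * x) := by group
    rw [this]
    exact hV₁mul (Set.mul_mem_mul hv.1 hbV₁)
  -- the R-indexed base
  refine ⟨fun r => T (U (φ r).1) ∩ (QuotientGroup.mk ⁻¹' (W (φ r).2)), ?_, ?_, ?_⟩
  · intro r
    refine Filter.inter_mem (hTnhds _ (hU1 _)) ?_
    exact QuotientGroup.continuous_mk.continuousAt.preimage_mem_nhds
      (by simpa using hW1 (φ r).2)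
  · intro r r' hrr'
    have h1 : (φ r).1 ≤ (φ r').1 := (hφ hrr').1
    have h2 : (φ r).2 ≤ (φ r').2 := (hφ hrr').2
    exact Set.inter_subset_inter (hTmono (hU2 h1)) (Set.preimage_mono (hW2 h2))
  · intro V hV
    obtain ⟨A, hA, V₂, hV₂open, hV₂1, hkey⟩ := key V hV
    obtain ⟨pi, hpi⟩ := hU3 A hA
    have himg : (QuotientGroup.mk '' V₂ : Set (G ⧸ H)) ∈ nhds (1 : G ⧸ H) := by
      have := (QuotientGroup.isOpenMap_coe (N := H)) V₂ hV₂open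
      exact this.mem_nhds ⟨1, hV₂1, rfl⟩
    obtain ⟨qi, hqi⟩ := hW3 _ himg
    obtain ⟨r, hr⟩ := hφcof (pi, qi)
    refine ⟨r, ?_⟩
    rintro x ⟨hx1, hx2⟩
    have hxA : x ∈ T A := hTmono (hpi.trans' (hU2 hr.1)) hx1
    have hxW : (QuotientGroup.mk x : G ⧸ H) ∈ QuotientGroup.mk '' V₂ :=
      hqi (hW2 hr.2 hx2)
    obtain ⟨v, hvV₂, hveq⟩ := hxW
    have hvH : v⁻¹ * x ∈ H := (QuotientGroup.eq (s := H)).mp hveq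
    exact hkey x hxA v hvV₂ hvH
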